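/- Let J: ℝ⁴ → ℝ⁴ be given by J(x₁,x₂,y₁,y₂) = (-x₂, x₁, y₂, -y₁), and let X(r,φ) = (r cos φ, (λ/r) cos φ, r sin φ, -(λ/r) sin φ). Then the tangent vectors X_r, X_φ are orthogonal to JX_r and to JX_φ at every point; in particular X is a Lagrangian immersion with respect to the complex structure J. -/

import Mathlib

noncomputable def X (lam r φ : ℝ) : EuclideanSpace ℝ (Fin 4) :=
  (WithLp.equiv 2 (Fin 4 → ℝ)).symm
    ![r * Real.cos φ, (lam / r) * Real.cos φ, r * Real.sin φ, -(lam / r) * Real.sin φ]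

noncomputable def Jmap (v : EuclideanSpace ℝ (Fin 4)) : EuclideanSpace ℝ (Fin 4) :=
  (WithLp.equiv 2 (Fin 4 → ℝ)).symm ![-(v 1), v 0, v 3, -(v 2)]

lemma derivR (lam r φ : ℝ) (hr : 0 < r) :
    HasDerivAt (fun s => X lam s φ)
      ((WithLp.equiv 2 (Fin 4 → ℝ)).symm
        ![Real.cos φ, (-lam / r^2) * Real.cos φ, Real.sin φ, -(-lam / r^2) * Real.sin φ]) r := by
  have hinv : HasDerivAt (fun s : ℝ => lam / s) (-lam / r^2) r := by
    have h2 : -lam / r^2 = (0 * r - lam * 1) / r ^ 2 := by ring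
    rw [h2]
    exact (hasDerivAt_const r lam).div (hasDerivAt_id r) hr.ne'
  have h : HasDerivAt (fun s => (fun i => X lam s φ i : Fin 4 → ℝ))
      ![Real.cos φ, (-lam / r^2) * Real.cos φ, Real.sin φ, -(-lam / r^2) * Real.sin φ] r := by
    rw [hasDerivAt_pi]
    intro i
    fin_cases i
    · exact hasDerivAt_mul_const (Real.cos φ)
    · exact hinv.mul_const (Real.cos φ)
    · exact hasDerivAt_mul_const (Real.sin φ)
    · exact hinv.neg.mul_const (Real.sin φ)
  exact ((PiLp.continuousLinearEquiv 2 ℝ (fun _ : Fin 4 => ℝ)).symm :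
      (Fin 4 → ℝ) →L[ℝ] EuclideanSpace ℝ (Fin 4)).hasFDerivAt.comp_hasDerivAt r h

lemma derivPhi (lam r φ : ℝ) :
    HasDerivAt (fun ψ => X lam r ψ)
      ((WithLp.equiv 2 (Fin 4 → ℝ)).symm
        ![r * -Real.sin φ, (lam / r) * -Real.sin φ, r * Real.cos φ, -(lam / r) * Real.cos φ]) φ := by
  have h : HasDerivAt (fun ψ => (fun i => X lam r ψ i : Fin 4 → ℝ))
      ![r * -Real.sin φ, (lam / r) * -Real.sin φ, r * Real.cos φ, -(lam / r) * Real.cos φ] φ := by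
    rw [hasDerivAt_pi]
    intro i
    fin_cases i
    · exact (Real.hasDerivAt_cos φ).const_mul r
    · exact (Real.hasDerivAt_cos φ).const_mul (lam / r)
    · exact (Real.hasDerivAt_sin φ).const_mul r
    · exact (Real.hasDerivAt_sin φ).const_mul (-(lam / r))
  exact ((PiLp.continuousLinearEquiv 2 ℝ (fun _ : Fin 4 => ℝ)).symm :
      (Fin 4 → ℝ) →L[ℝ] EuclideanSpace ℝ (Fin 4)).hasFDerivAt.comp_hasDerivAt φ h

theorem stmt2 (lam : ℝ) (hlam : lam ≠ 0) (r φ : ℝ) (hr : 0 < r) :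
    (inner ℝ (deriv (fun s => X lam s φ) r) (Jmap (deriv (fun s => X lam s φ) r)) : ℝ) = 0 ∧
    (inner ℝ (deriv (fun s => X lam s φ) r) (Jmap (deriv (fun ψ => X lam r ψ) φ)) : ℝ) = 0 ∧
    (inner ℝ (deriv (fun ψ => X lam r ψ) φ) (Jmap (deriv (fun s => X lam s φ) r)) : ℝ) = 0 ∧
    (inner ℝ (deriv (fun ψ => X lam r ψ) φ) (Jmap (deriv (fun ψ => X lam r ψ) φ)) : ℝ) = 0 := by
  rw [(derivR lam r φ hr).deriv, (derivPhi lam r φ).deriv]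
  refine ⟨?_, ?_, ?_, ?_⟩ <;>
  · simp only [Jmap, PiLp.inner_apply, Fin.sum_univ_four, WithLp.equiv_symm_apply, WithLp.ofLp_toLp,
      Matrix.cons_val_zero, Matrix.cons_val_one, Matrix.head_cons, Matrix.cons_val_two,
      Matrix.tail_cons, Matrix.cons_val_three, RCLike.inner_apply, conj_trivial]
    field_simp
    ring
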